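/- For every n ≥ 4, there is no laminar matroid N (on any type) for which there exists an online matroid embedding of the class of laminar matroids with at most n elements into N. -/

import Mathlib

open Set

/-- The rank of a set in a matroid: the supremum of the cardinalities of its
independent subsets. -/
noncomputable def mRank {α : Type*} (M : Matroid α) (S : Set α) : ℕ∞ :=
  ⨆ I ∈ {I : Set α | M.Indep I ∧ I ⊆ S}, I.encard

/-- The rank of a set of vectors: the dimension of its linear span. -/
noncomputable def spanRank (K : Type*) [Field K] {W : Type*} [AddCommGroup W] [Module K W]
    (S : Set W) : ℕ :=
  Module.finrank K (Submodule.span K S)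

/-- The `k`-prefix of an ordered matroid on `Fin m`: its restriction to the
first `k` elements, viewed as a matroid on `Fin k`. -/
def prefixMatroid {k m : ℕ} (h : k ≤ m) (M : Matroid (Fin m)) : Matroid (Fin k) :=
  M.comap (Fin.castLE h)

/-- An online matroid morphism (OMM) of the class `P` of ordered matroids into the host
matroid `N`: a rank-preserving map for each matroid of the class, consistent on prefixes. -/
def OMMof (P : (m : ℕ) → Matroid (Fin m) → Prop) {β : Type*} (N : Matroid β) : Prop :=
  ∃ f : (m : ℕ) → Matroid (Fin m) → (Fin m → β),
    (∀ m (M : Matroid (Fin m)), P m M →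
      ∀ S : Set (Fin m), S ⊆ M.E → mRank N (f m M '' S) = mRank M S) ∧
    (∀ k m (hkm : k ≤ m) (M : Matroid (Fin m)), P m M →
      ∀ i : Fin k, f k (prefixMatroid hkm M) i = f m M (Fin.castLE hkm i))

/-- An online matroid embedding (OME): an online matroid morphism all of whose maps are
injective. -/
def OMEof (P : (m : ℕ) → Matroid (Fin m) → Prop) {β : Type*} (N : Matroid β) : Prop :=
  ∃ f : (m : ℕ) → Matroid (Fin m) → (Fin m → β),
    (∀ m (M : Matroid (Fin m)), P m M → Function.Injective (f m M)) ∧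
    (∀ m (M : Matroid (Fin m)), P m M →
      ∀ S : Set (Fin m), S ⊆ M.E → mRank N (f m M '' S) = mRank M S) ∧
    (∀ k m (hkm : k ≤ m) (M : Matroid (Fin m)), P m M →
      ∀ i : Fin k, f k (prefixMatroid hkm M) i = f m M (Fin.castLE hkm i))

/-- A family of sets is laminar if any two of its members are disjoint or nested. -/
def IsLaminarFamily {γ : Type*} (𝒜 : Set (Set γ)) : Prop :=
  ∀ A ∈ 𝒜, ∀ B ∈ 𝒜, A ∩ B = ∅ ∨ A \ B = ∅ ∨ B \ A = ∅

/-- A matroid is laminar if its independent sets are exactly the subsets of the ground set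
obeying cardinality constraints over a laminar family of subsets of the ground set. -/
def IsLaminar {γ : Type*} (M : Matroid γ) : Prop :=
  ∃ (𝒜 : Set (Set γ)) (c : Set γ → ℕ), IsLaminarFamily 𝒜 ∧ (∀ A ∈ 𝒜, A ⊆ M.E) ∧
    ∀ I : Set γ, M.Indep I ↔ (I ⊆ M.E ∧ ∀ A ∈ 𝒜, (I ∩ A).encard ≤ (c A : ℕ∞))

/- ======================= auxiliary definitions and lemmas ======================= -/

section Aux

open Matroid

/-- The rank-2 "laminar" matroid on `Fin 4` whose independent sets are those meeting
`T` in at most two elements. -/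
noncomputable def tIM (T : Set (Fin 4)) : IndepMatroid (Fin 4) :=
  IndepMatroid.ofFinite finite_univ (fun I => (I ∩ T).encard ≤ 2)
    (by simp)
    (fun I J hJ hIJ => le_trans (encard_mono (inter_subset_inter_left _ hIJ)) hJ)
    (by
      intro I J hI hJ hlt
      by_cases h1 : (I ∩ T).encard ≤ 1
      · obtain ⟨e, heJ, heI⟩ := exists_mem_notMem_of_ncard_lt_ncard hlt
        refine ⟨e, heJ, heI, ?_⟩
        have hsub : insert e I ∩ T ⊆ insert e (I ∩ T) := by
          intro x hx
          rcases hx.1 with rfl | h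
          · exact mem_insert _ _
          · exact mem_insert_of_mem _ ⟨h, hx.2⟩
        calc (insert e I ∩ T).encard ≤ (insert e (I ∩ T)).encard := encard_mono hsub
          _ ≤ (I ∩ T).encard + 1 := encard_insert_le _ _
          _ ≤ 1 + 1 := by exact add_le_add_left h1 1
          _ = 2 := by norm_num
      · push_neg at h1
        have h2 : 2 ≤ (I ∩ T).encard := Order.add_one_le_of_lt h1
        have hex : ∃ e ∈ J, e ∉ I ∧ e ∉ T := by
          by_contra hc
          push_neg at hc
          have hJT : J \ T ⊆ I \ T := by
            intro x hx
            exact ⟨by_contra fun hxI => hx.2 (hc x hx.1 hxI), hx.2⟩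
          have e1 : (J ∩ T).ncard + (J \ T).ncard = J.ncard :=
            ncard_inter_add_ncard_diff_eq_ncard J T (toFinite J)
          have e2 : (I ∩ T).ncard + (I \ T).ncard = I.ncard :=
            ncard_inter_add_ncard_diff_eq_ncard I T (toFinite I)
          have l1 : (J ∩ T).ncard ≤ 2 := by
            have := (toFinite (J ∩ T)).cast_ncard_eq
            rw [← this] at hJ
            exact_mod_cast hJ
          have l2 : 2 ≤ (I ∩ T).ncard := by
            have := (toFinite (I ∩ T)).cast_ncard_eq
            rw [← this] at h2
            exact_mod_cast h2
          have l3 : (J \ T).ncard ≤ (I \ T).ncard :=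
            ncard_le_ncard hJT (toFinite _)
          omega
        obtain ⟨e, heJ, heI, heT⟩ := hex
        refine ⟨e, heJ, heI, ?_⟩
        show (insert e I ∩ T).encard ≤ 2
        rw [insert_inter_of_notMem heT]
        exact hI)
    (fun I _ => subset_univ I)

noncomputable def tM (T : Set (Fin 4)) : Matroid (Fin 4) := (tIM T).matroid

lemma tM_indep {T I : Set (Fin 4)} : (tM T).Indep I ↔ (I ∩ T).encard ≤ 2 := by
  simp [tM, tIM]

lemma tM_E {T : Set (Fin 4)} : (tM T).E = univ := by
  simp [tM, tIM]

lemma tM_laminar (T : Set (Fin 4)) : IsLaminar (tM T) := by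
  refine ⟨{T}, fun _ => 2, ?_, ?_, ?_⟩
  · intro A hA B hB
    rw [mem_singleton_iff] at hA hB
    subst hA; subst hB
    exact Or.inr (Or.inl (diff_self))
  · intro A hA
    rw [tM_E]; exact subset_univ A
  · intro I
    rw [tM_indep, tM_E]
    constructor
    · intro h
      refine ⟨subset_univ I, ?_⟩
      intro A hA
      rw [mem_singleton_iff] at hA
      subst hA
      exact_mod_cast h
    · rintro ⟨-, h⟩
      exact_mod_cast h T rfl

lemma freeOn_laminar {γ : Type*} (E : Set γ) : IsLaminar (Matroid.freeOn E) :=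
  ⟨∅, fun _ => 0, fun A hA => absurd hA (notMem_empty A),
    fun A hA => absurd hA (notMem_empty A),
    fun I => by simp [Matroid.freeOn_indep_iff]⟩

lemma mRank_of_indep {α : Type*} {M : Matroid α} {S : Set α} (h : M.Indep S) :
    mRank M S = S.encard := by
  apply le_antisymm
  · exact iSup₂_le fun I hI => encard_mono hI.2
  · exact le_iSup₂ (f := fun (I : Set α) (_ : I ∈ {I | M.Indep I ∧ I ⊆ S}) => I.encard)
      S ⟨h, Subset.rfl⟩

lemma encard_le_mRank {α : Type*} {M : Matroid α} {S : Set α} (h : M.Indep S) :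
    S.encard ≤ mRank M S :=
  le_iSup₂ (f := fun (I : Set α) (_ : I ∈ {I | M.Indep I ∧ I ⊆ S}) => I.encard) S ⟨h, Subset.rfl⟩

lemma mRank_tM_le (T : Set (Fin 4)) : mRank (tM T) T ≤ 2 := by
  refine iSup₂_le fun I hI => ?_
  have h := tM_indep.mp hI.1
  rwa [inter_eq_self_of_subset_left hI.2] at h

lemma not_indep_of_mRank {β : Type*} {N : Matroid β} {S : Set β}
    (h : mRank N S ≤ 2) (hS : S.encard = 3) : ¬ N.Indep S := by
  intro hind
  have h1 := encard_le_mRank hind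
  rw [hS] at h1
  have : (3 : ℕ∞) ≤ 2 := h1.trans h
  norm_num at this

lemma indep_of_mRank_three {β : Type*} {N : Matroid β} {S : Set β}
    (h : mRank N S = 3) (hS : S.encard = 3) : N.Indep S := by
  have hfin : S.Finite := finite_of_encard_eq_coe (by exact_mod_cast hS)
  have hex : ∃ I, (N.Indep I ∧ I ⊆ S) ∧ 2 < I.encard := by
    by_contra hc
    push_neg at hc
    have : mRank N S ≤ 2 := iSup₂_le fun I hI => hc I hI
    rw [h] at this
    norm_num at this
  obtain ⟨I, ⟨hind, hsubI⟩, hlt⟩ := hex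
  have h3 : (3 : ℕ∞) ≤ I.encard := Order.add_one_le_of_lt hlt
  have hIS : I = S := hfin.eq_of_subset_of_encard_le' hsubI (by rw [hS]; exact h3)
  rwa [← hIS]

lemma encard_triple {β : Type*} {a b e : β} (hab : a ≠ b) (hae : a ≠ e) (hbe : b ≠ e) :
    ({a, b, e} : Set β).encard = 3 := by
  rw [encard_insert_of_notMem (by simp [hab, hae]), encard_pair hbe]; rfl

lemma mem_of_violation {β : Type*} {N : Matroid β} {𝒜 : Set (Set β)} {c : Set β → ℕ}
    (hiff : ∀ I, N.Indep I ↔ (I ⊆ N.E ∧ ∀ A ∈ 𝒜, (I ∩ A).encard ≤ (c A : ℕ∞)))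
    {A : Set β} (hA : A ∈ 𝒜) {a b e : β}
    (hv : (c A : ℕ∞) < (({a, b, e} : Set β) ∩ A).encard)
    (hpair : N.Indep {b, e}) : a ∈ A := by
  by_contra ha
  have hsub : ({a, b, e} : Set β) ∩ A ⊆ ({b, e} : Set β) ∩ A := by
    rintro x ⟨hx, hxA⟩
    rcases hx with rfl | h
    · exact absurd hxA ha
    · exact ⟨h, hxA⟩
  have hle := ((hiff _).mp hpair).2 A hA
  exact absurd ((hv.trans_le (encard_mono hsub)).trans_le hle) (lt_irrefl _)

lemma subset_be {β : Type*} {a b e : β} : ({b, e} : Set β) ⊆ ({a, b, e} : Set β) := by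
  intro x hx
  rcases hx with rfl | hx
  · exact Or.inr (Or.inl rfl)
  · exact Or.inr (Or.inr hx)

lemma subset_ae {β : Type*} {a b e : β} : ({a, e} : Set β) ⊆ ({a, b, e} : Set β) := by
  intro x hx
  rcases hx with rfl | hx
  · exact Or.inl rfl
  · exact Or.inr (Or.inr hx)

lemma subset_ab {β : Type*} {a b e : β} : ({a, b} : Set β) ⊆ ({a, b, e} : Set β) := by
  intro x hx
  rcases hx with rfl | hx
  · exact Or.inl rfl
  · exact Or.inr (Or.inl hx)

lemma castLE_mem {h : (3:ℕ) ≤ 4} (y : Fin 3) :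
    Fin.castLE h y = 0 ∨ Fin.castLE h y = 1 ∨ Fin.castLE h y = 2 := by
  fin_cases y
  exacts [Or.inl rfl, Or.inr (Or.inl rfl), Or.inr (Or.inr rfl)]

lemma prefix_tM_eq {T : Set (Fin 4)} {a b : Fin 4} (hab : a ≠ b) (h : (3:ℕ) ≤ 4)
    (hT : ∀ y : Fin 3, Fin.castLE h y ∈ T → (Fin.castLE h y = a ∨ Fin.castLE h y = b)) :
    prefixMatroid h (tM T) = Matroid.freeOn (univ : Set (Fin 3)) := by
  refine Matroid.ext_indep ?_ ?_
  · show ((tM T).comap (Fin.castLE h)).E = _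
    rw [Matroid.comap_ground_eq, tM_E, preimage_univ, Matroid.freeOn_ground]
  · intro I hI
    rw [Matroid.freeOn_indep_iff]
    show ((tM T).comap (Fin.castLE h)).Indep I ↔ _
    rw [Matroid.comap_indep_iff, tM_indep]
    constructor
    · intro _; exact subset_univ I
    · intro _
      refine ⟨?_, (Fin.castLE_injective h).injOn⟩
      calc (Fin.castLE h '' I ∩ T).encard ≤ ({a, b} : Set (Fin 4)).encard := by
            refine encard_mono ?_
            rintro x ⟨⟨y, hy, rfl⟩, hxT⟩
            rcases hT y hxT with h' | h'
            · exact Or.inl h'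
            · exact Or.inr h'
        _ ≤ 2 := (encard_pair hab).le

end Aux

/-- For every `n ≥ 4`, there is no laminar matroid `N` (on any type) admitting an online
matroid embedding of the class of laminar matroids with at most `n` elements. -/
theorem stmt16 (n : ℕ) (hn : 4 ≤ n) (β : Type*) (N : Matroid β) (hN : IsLaminar N) :
    ¬ OMEof (fun m M => m ≤ n ∧ M.E = univ ∧ IsLaminar M) N := by
  rintro ⟨f, hinj, hrk, hcons⟩
  obtain ⟨𝒜, c, hlam, hsub𝒜, hiff⟩ := hN
  have h34 : (3:ℕ) ≤ 4 := by norm_num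
  -- the two 4-element laminar matroids
  set MA := tM ({0,2,3} : Set (Fin 4)) with hMA
  set MB := tM ({1,2,3} : Set (Fin 4)) with hMB
  have PA : 4 ≤ n ∧ MA.E = univ ∧ IsLaminar MA := ⟨hn, tM_E, tM_laminar _⟩
  have PB : 4 ≤ n ∧ MB.E = univ ∧ IsLaminar MB := ⟨hn, tM_E, tM_laminar _⟩
  -- both have the free matroid on `Fin 3` as 3-prefix
  have prefA : prefixMatroid h34 MA = Matroid.freeOn (univ : Set (Fin 3)) := by
    refine prefix_tM_eq (a := 0) (b := 2) (by decide) h34 (fun y hy => ?_)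
    rcases castLE_mem (h := h34) y with h' | h' | h' <;> rw [h'] at hy ⊢ <;> simp_all
  have prefB : prefixMatroid h34 MB = Matroid.freeOn (univ : Set (Fin 3)) := by
    refine prefix_tM_eq (a := 1) (b := 2) (by decide) h34 (fun y hy => ?_)
    rcases castLE_mem (h := h34) y with h' | h' | h' <;> rw [h'] at hy ⊢ <;> simp_all
  -- consistency: the first three images agree
  have consA : ∀ i : Fin 3, f 3 (Matroid.freeOn (univ : Set (Fin 3))) i
      = f 4 MA (Fin.castLE h34 i) := by
    intro i; rw [← prefA]; exact hcons 3 4 h34 MA PA i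
  have consB : ∀ i : Fin 3, f 3 (Matroid.freeOn (univ : Set (Fin 3))) i
      = f 4 MB (Fin.castLE h34 i) := by
    intro i; rw [← prefB]; exact hcons 3 4 h34 MB PB i
  have hBA : ∀ i : Fin 3, f 4 MB (Fin.castLE h34 i) = f 4 MA (Fin.castLE h34 i) := by
    intro i; rw [← consB i, consA i]
  set x0 := f 4 MA 0 with hx0
  set x1 := f 4 MA 1 with hx1
  set p := f 4 MA 2 with hp
  set q := f 4 MA 3 with hq
  set r := f 4 MB 3 with hr
  have e0 : f 4 MB 0 = x0 := hBA 0
  have e1 : f 4 MB 1 = x1 := hBA 1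
  have e2 : f 4 MB 2 = p := hBA 2
  -- injectivity and distinctness
  have injA := hinj 4 MA PA
  have injB := hinj 4 MB PB
  have d01 : x0 ≠ x1 := fun h => absurd (injA h) (by decide)
  have d02 : x0 ≠ p := fun h => absurd (injA h) (by decide)
  have d03 : x0 ≠ q := fun h => absurd (injA h) (by decide)
  have d12 : x1 ≠ p := fun h => absurd (injA h) (by decide)
  have d13 : x1 ≠ q := fun h => absurd (injA h) (by decide)
  have d23 : p ≠ q := fun h => absurd (injA h) (by decide)
  have d0r : x0 ≠ r := fun h =>
    absurd (injB (show f 4 MB 0 = f 4 MB 3 by rw [e0]; exact h)) (by decide)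
  have d1r : x1 ≠ r := fun h =>
    absurd (injB (show f 4 MB 1 = f 4 MB 3 by rw [e1]; exact h)) (by decide)
  have dpr : p ≠ r := fun h =>
    absurd (injB (show f 4 MB 2 = f 4 MB 3 by rw [e2]; exact h)) (by decide)
  -- rank preservation
  have RA : ∀ S : Set (Fin 4), mRank N (f 4 MA '' S) = mRank MA S := fun S =>
    hrk 4 MA PA S (by rw [show MA.E = univ from tM_E]; exact subset_univ S)
  have RB : ∀ S : Set (Fin 4), mRank N (f 4 MB '' S) = mRank MB S := fun S =>
    hrk 4 MB PB S (by rw [show MB.E = univ from tM_E]; exact subset_univ S)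
  -- images
  have imA012 : f 4 MA '' {0,1,2} = {x0,x1,p} := by
    rw [image_insert_eq, image_insert_eq, image_singleton]
  have imA123 : f 4 MA '' {1,2,3} = {x1,p,q} := by
    rw [image_insert_eq, image_insert_eq, image_singleton]
  have imA013 : f 4 MA '' {0,1,3} = {x0,x1,q} := by
    rw [image_insert_eq, image_insert_eq, image_singleton]
  have imA023 : f 4 MA '' {0,2,3} = {x0,p,q} := by
    rw [image_insert_eq, image_insert_eq, image_singleton]
  have imB023 : f 4 MB '' {0,2,3} = {x0,p,r} := by
    rw [image_insert_eq, image_insert_eq, image_singleton, e0, e2]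
  have imB013 : f 4 MB '' {0,1,3} = {x0,x1,r} := by
    rw [image_insert_eq, image_insert_eq, image_singleton, e0, e1]
  have imB123 : f 4 MB '' {1,2,3} = {x1,p,r} := by
    rw [image_insert_eq, image_insert_eq, image_singleton, e1, e2]
  -- independence facts in the source matroids
  have iA012 : MA.Indep {0,1,2} := tM_indep.mpr (by
    rw [show ({0,1,2} : Set (Fin 4)) ∩ {0,2,3} = {0,2} by
      ext x; simp only [mem_inter_iff, mem_insert_iff, mem_singleton_iff]
      fin_cases x <;> decide]
    exact (encard_pair (by decide)).le)
  have iA123 : MA.Indep {1,2,3} := tM_indep.mpr (by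
    rw [show ({1,2,3} : Set (Fin 4)) ∩ {0,2,3} = {2,3} by
      ext x; simp only [mem_inter_iff, mem_insert_iff, mem_singleton_iff]
      fin_cases x <;> decide]
    exact (encard_pair (by decide)).le)
  have iA013 : MA.Indep {0,1,3} := tM_indep.mpr (by
    rw [show ({0,1,3} : Set (Fin 4)) ∩ {0,2,3} = {0,3} by
      ext x; simp only [mem_inter_iff, mem_insert_iff, mem_singleton_iff]
      fin_cases x <;> decide]
    exact (encard_pair (by decide)).le)
  have iB023 : MB.Indep {0,2,3} := tM_indep.mpr (by
    rw [show ({0,2,3} : Set (Fin 4)) ∩ {1,2,3} = {2,3} by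
      ext x; simp only [mem_inter_iff, mem_insert_iff, mem_singleton_iff]
      fin_cases x <;> decide]
    exact (encard_pair (by decide)).le)
  have iB013 : MB.Indep {0,1,3} := tM_indep.mpr (by
    rw [show ({0,1,3} : Set (Fin 4)) ∩ {1,2,3} = {1,3} by
      ext x; simp only [mem_inter_iff, mem_insert_iff, mem_singleton_iff]
      fin_cases x <;> decide]
    exact (encard_pair (by decide)).le)
  -- independent triples in N
  have t1 : N.Indep {x0,x1,p} := by
    refine indep_of_mRank_three ?_ (encard_triple d01 d02 d12)
    rw [← imA012, RA, mRank_of_indep iA012,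
      encard_triple (by decide) (by decide) (by decide : (1 : Fin 4) ≠ 2)]
  have t3 : N.Indep {x1,p,q} := by
    refine indep_of_mRank_three ?_ (encard_triple d12 d13 d23)
    rw [← imA123, RA, mRank_of_indep iA123,
      encard_triple (by decide) (by decide) (by decide : (2 : Fin 4) ≠ 3)]
  have t6 : N.Indep {x0,x1,q} := by
    refine indep_of_mRank_three ?_ (encard_triple d01 d03 d13)
    rw [← imA013, RA, mRank_of_indep iA013,
      encard_triple (by decide) (by decide) (by decide : (1 : Fin 4) ≠ 3)]
  have t4 : N.Indep {x0,p,r} := by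
    refine indep_of_mRank_three ?_ (encard_triple d02 d0r dpr)
    rw [← imB023, RB, mRank_of_indep iB023,
      encard_triple (by decide) (by decide) (by decide : (2 : Fin 4) ≠ 3)]
  have t5 : N.Indep {x0,x1,r} := by
    refine indep_of_mRank_three ?_ (encard_triple d01 d0r d1r)
    rw [← imB013, RB, mRank_of_indep iB013,
      encard_triple (by decide) (by decide) (by decide : (1 : Fin 4) ≠ 3)]
  -- dependent triples in N
  have ndA : ¬ N.Indep {x0,p,q} := by
    refine not_indep_of_mRank ?_ (encard_triple d02 d03 d23)
    rw [← imA023, RA]; exact mRank_tM_le _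
  have ndB : ¬ N.Indep {x1,p,r} := by
    refine not_indep_of_mRank ?_ (encard_triple d12 d1r dpr)
    rw [← imB123, RB]; exact mRank_tM_le _
  -- both dependent triples lie in the ground set of N
  have hgA : ({x0,p,q} : Set β) ⊆ N.E := by
    intro x hx
    simp only [mem_insert_iff, mem_singleton_iff] at hx
    rcases hx with rfl | rfl | rfl
    · exact t1.subset_ground (Or.inl rfl)
    · exact t1.subset_ground (Or.inr (Or.inr rfl))
    · exact t3.subset_ground (Or.inr (Or.inr rfl))
  have hgB : ({x1,p,r} : Set β) ⊆ N.E := by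
    intro x hx
    simp only [mem_insert_iff, mem_singleton_iff] at hx
    rcases hx with rfl | rfl | rfl
    · exact t1.subset_ground (Or.inr (Or.inl rfl))
    · exact t1.subset_ground (Or.inr (Or.inr rfl))
    · exact t4.subset_ground (Or.inr (Or.inr rfl))
  -- extract the violated constraints
  have hvA : ∃ A ∈ 𝒜, (c A : ℕ∞) < (({x0,p,q} : Set β) ∩ A).encard := by
    by_contra hc
    push_neg at hc
    exact ndA ((hiff _).mpr ⟨hgA, hc⟩)
  obtain ⟨A, hA𝒜, hvA⟩ := hvA
  have hvB : ∃ B ∈ 𝒜, (c B : ℕ∞) < (({x1,p,r} : Set β) ∩ B).encard := by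
    by_contra hc
    push_neg at hc
    exact ndB ((hiff _).mpr ⟨hgB, hc⟩)
  obtain ⟨B, hB𝒜, hvB⟩ := hvB
  -- memberships in A
  have hx0A : x0 ∈ A := mem_of_violation hiff hA𝒜 hvA (t3.subset subset_be)
  have hpA : p ∈ A := by
    have hvA' := hvA
    rw [show ({x0,p,q} : Set β) = {p,x0,q} from insert_comm x0 p {q}] at hvA'
    exact mem_of_violation hiff hA𝒜 hvA' (t6.subset subset_ae)
  have hqA : q ∈ A := by
    have hvA' := hvA
    rw [show ({x0,p,q} : Set β) = {q,x0,p} by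
      rw [pair_comm p q, insert_comm x0 q]] at hvA'
    exact mem_of_violation hiff hA𝒜 hvA' (t1.subset subset_ae)
  -- memberships in B
  have hx1B : x1 ∈ B := mem_of_violation hiff hB𝒜 hvB (t4.subset subset_be)
  have hpB : p ∈ B := by
    have hvB' := hvB
    rw [show ({x1,p,r} : Set β) = {p,x1,r} from insert_comm x1 p {r}] at hvB'
    exact mem_of_violation hiff hB𝒜 hvB' (t5.subset subset_be)
  have hrB : r ∈ B := by
    have hvB' := hvB
    rw [show ({x1,p,r} : Set β) = {r,x1,p} by
      rw [pair_comm p r, insert_comm x1 r]] at hvB'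
    exact mem_of_violation hiff hB𝒜 hvB' (t1.subset subset_be)
  -- the capacities are at most 2
  have hcA2 : c A ≤ 2 := by
    have h3 : (({x0,p,q} : Set β) ∩ A).encard ≤ 3 :=
      le_trans (encard_mono inter_subset_left) (encard_triple d02 d03 d23).le
    have : (c A : ℕ∞) < ((3:ℕ) : ℕ∞) := by exact_mod_cast hvA.trans_le h3
    have : c A < 3 := by exact_mod_cast this
    omega
  have hcB2 : c B ≤ 2 := by
    have h3 : (({x1,p,r} : Set β) ∩ B).encard ≤ 3 :=
      le_trans (encard_mono inter_subset_left) (encard_triple d12 d1r dpr).le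
    have : (c B : ℕ∞) < ((3:ℕ) : ℕ∞) := by exact_mod_cast hvB.trans_le h3
    have : c B < 3 := by exact_mod_cast this
    omega
  -- laminarity yields the contradiction
  rcases hlam A hA𝒜 B hB𝒜 with hd | hAB | hBA'
  · exact (Set.nonempty_of_mem (show p ∈ A ∩ B from ⟨hpA, hpB⟩)).ne_empty hd
  · have hABs : A ⊆ B := diff_eq_empty.mp hAB
    have hsub3 : ({x0,x1,p} : Set β) ⊆ B := by
      intro x hx
      simp only [mem_insert_iff, mem_singleton_iff] at hx
      rcases hx with rfl | rfl | rfl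
      exacts [hABs hx0A, hx1B, hpB]
    have hle := ((hiff _).mp t1).2 B hB𝒜
    rw [inter_eq_self_of_subset_left hsub3, encard_triple d01 d02 d12] at hle
    have hcon : (3:ℕ∞) ≤ 2 := hle.trans (by exact_mod_cast hcB2)
    norm_num at hcon
  · have hBAs : B ⊆ A := diff_eq_empty.mp hBA'
    have hsub3 : ({x1,p,q} : Set β) ⊆ A := by
      intro x hx
      simp only [mem_insert_iff, mem_singleton_iff] at hx
      rcases hx with rfl | rfl | rfl
      exacts [hBAs hx1B, hpA, hqA]
    have hle := ((hiff _).mp t3).2 A hA𝒜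
    rw [inter_eq_self_of_subset_left hsub3, encard_triple d12 d13 d23] at hle
    have hcon : (3:ℕ∞) ≤ 2 := hle.trans (by exact_mod_cast hcA2)
    norm_num at hcon
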